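/- Let k be a complete nonarchimedean field with ring of integers k°. Then GLₙ(k°) is a maximal bounded subgroup of GLₙ(k): if H is a bounded subgroup of GLₙ(k) containing GLₙ(k°), then H = GLₙ(k°). -/

import Mathlib

open Matrix IsUltrametricDist Pointwise

section aux
variable {k : Type*} [NontriviallyNormedField k] [IsUltrametricDist k] {n : ℕ}

lemma aux_det_norm_le_one {M : Matrix (Fin n) (Fin n) k} (h : ∀ i j, ‖M i j‖ ≤ 1) :
    ‖M.det‖ ≤ 1 := by
  rw [Matrix.det_apply]
  refine norm_sum_le_of_forall_le_of_nonneg zero_le_one ?_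
  intro σ _
  have hp : ‖∏ i, M (σ i) i‖ ≤ 1 := by
    rw [norm_prod]
    exact Finset.prod_le_one (fun i _ => norm_nonneg _) (fun i _ => h _ _)
  rcases Int.units_eq_one_or (Equiv.Perm.sign σ) with hs | hs <;>
    simp only [hs, Units.smul_def, Units.val_one, Units.val_neg, one_smul, neg_smul,
      norm_neg] <;> exact hp

omit [IsUltrametricDist k] in
lemma aux_exists_max (x : Fin n → k) [Nonempty (Fin n)] : ∃ q, ‖x q‖ = ‖x‖ := by
  obtain ⟨q, _, hq⟩ := Finset.exists_mem_eq_sup Finset.univ Finset.univ_nonempty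
    (fun i => ‖x i‖₊)
  exact ⟨q, by rw [Pi.norm_def, hq]; rfl⟩

end aux

/-- `GLₙ(k°)` is a maximal bounded subgroup of `GLₙ(k)`: any bounded
subgroup `H` of `GLₙ(k)` containing all matrices `g` with `g, g⁻¹` integral consists
exactly of such matrices. -/
theorem stmt11 (k : Type*) [NontriviallyNormedField k] [IsUltrametricDist k] [CompleteSpace k]
    (n : ℕ) (H : Subgroup (GL (Fin n) k))
    (hbdd : ∃ C : ℝ, ∀ h ∈ H, ∀ i j,
      ‖(h : Matrix (Fin n) (Fin n) k) i j‖ ≤ C ∧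
      ‖((h⁻¹ : GL (Fin n) k) : Matrix (Fin n) (Fin n) k) i j‖ ≤ C)
    (hcont : ∀ g : GL (Fin n) k,
      (∀ i j, ‖(g : Matrix (Fin n) (Fin n) k) i j‖ ≤ 1 ∧
        ‖((g⁻¹ : GL (Fin n) k) : Matrix (Fin n) (Fin n) k) i j‖ ≤ 1) → g ∈ H) :
    ∀ h ∈ H, ∀ i j, ‖(h : Matrix (Fin n) (Fin n) k) i j‖ ≤ 1 ∧
      ‖((h⁻¹ : GL (Fin n) k) : Matrix (Fin n) (Fin n) k) i j‖ ≤ 1 := by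
  suffices key : ∀ h ∈ H, ∀ (i j : Fin n), ‖(h : Matrix (Fin n) (Fin n) k) i j‖ ≤ 1 by
    intro h hH i j
    exact ⟨key h hH i j, key _ (H.inv_mem hH) i j⟩
  intro h hH i j
  haveI : Nonempty (Fin n) := ⟨i⟩
  obtain ⟨C, hC⟩ := hbdd
  set N : (Fin n → k) → ℝ := fun x =>
    sSup (Set.range fun g : H => ‖((g : GL (Fin n) k) : Matrix (Fin n) (Fin n) k) *ᵥ x‖)
    with hNdef
  -- boundedness of the defining sets
  have hBdd : ∀ x : Fin n → k, BddAbove (Set.range fun g : H =>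
      ‖((g : GL (Fin n) k) : Matrix (Fin n) (Fin n) k) *ᵥ x‖) := by
    intro x
    refine ⟨(n : ℝ) * (max C 0 * ‖x‖), ?_⟩
    rintro r ⟨g, rfl⟩
    rw [pi_norm_le_iff_of_nonneg (by positivity)]
    intro a
    calc ‖(((g : GL (Fin n) k) : Matrix (Fin n) (Fin n) k) *ᵥ x) a‖
        = ‖∑ b, ((g : GL (Fin n) k) : Matrix (Fin n) (Fin n) k) a b * x b‖ := rfl
      _ ≤ ∑ b, ‖((g : GL (Fin n) k) : Matrix (Fin n) (Fin n) k) a b * x b‖ := norm_sum_le _ _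
      _ ≤ ∑ _b : Fin n, max C 0 * ‖x‖ := Finset.sum_le_sum (fun b _ => by
            rw [norm_mul]
            exact mul_le_mul (le_max_of_le_left ((hC _ g.2 a b).1)) (norm_le_pi_norm x b)
              (norm_nonneg _) (le_max_right _ _))
      _ = (n : ℝ) * (max C 0 * ‖x‖) := by simp [Finset.sum_const, Finset.card_univ]
  -- ‖x‖ ≤ N x
  have hle : ∀ x : Fin n → k, ‖x‖ ≤ N x := by
    intro x
    have h1 : ‖(((1 : H) : GL (Fin n) k) : Matrix (Fin n) (Fin n) k) *ᵥ x‖ ∈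
        Set.range fun g : H => ‖((g : GL (Fin n) k) : Matrix (Fin n) (Fin n) k) *ᵥ x‖ :=
      ⟨1, rfl⟩
    have := le_csSup (hBdd x) h1
    simpa [Matrix.one_mulVec] using this
  -- invariance under H
  have hmul : ∀ (g : GL (Fin n) k), g ∈ H → ∀ x : Fin n → k,
      N ((g : Matrix (Fin n) (Fin n) k) *ᵥ x) = N x := by
    intro g hg x
    apply congrArg sSup
    ext r
    constructor
    · rintro ⟨u, rfl⟩
      exact ⟨u * ⟨g, hg⟩, by simp [Matrix.mulVec_mulVec]⟩
    · rintro ⟨u, rfl⟩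
      refine ⟨u * ⟨g, hg⟩⁻¹, ?_⟩
      have hcoe : (((u * ⟨g, hg⟩⁻¹ : H) : GL (Fin n) k) : Matrix (Fin n) (Fin n) k)
          * (g : Matrix (Fin n) (Fin n) k)
          = ((u : GL (Fin n) k) : Matrix (Fin n) (Fin n) k) := by
        simp only [Subgroup.coe_mul, InvMemClass.coe_inv, Units.val_mul, mul_assoc,
          Units.inv_mul, mul_one]
      show ‖(((u * ⟨g, hg⟩⁻¹ : H) : GL (Fin n) k) : Matrix (Fin n) (Fin n) k) *ᵥ
          ((g : Matrix (Fin n) (Fin n) k) *ᵥ x)‖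
          = ‖((u : GL (Fin n) k) : Matrix (Fin n) (Fin n) k) *ᵥ x‖
      rw [Matrix.mulVec_mulVec, hcoe]
  -- homogeneity
  have hsmul : ∀ (c : k) (x : Fin n → k), N (c • x) = ‖c‖ * N x := by
    intro c x
    have hset : (Set.range fun g : H =>
          ‖((g : GL (Fin n) k) : Matrix (Fin n) (Fin n) k) *ᵥ (c • x)‖)
        = ‖c‖ • (Set.range fun g : H =>
          ‖((g : GL (Fin n) k) : Matrix (Fin n) (Fin n) k) *ᵥ x‖) := by
      rw [Set.smul_set_range]
      exact congrArg Set.range (funext fun g => by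
        rw [Matrix.mulVec_smul, norm_smul, smul_eq_mul])
    simp only [hNdef]
    rw [hset, Real.sSup_smul_of_nonneg (norm_nonneg c), smul_eq_mul]
  -- transitivity I : unimodular vectors
  have hbase : ∀ (x : Fin n → k) (p : Fin n), (∀ a, ‖x a‖ ≤ 1) → ‖x p‖ = 1 →
      N x = N (Pi.single p 1) := by
    intro x p hx hxp
    set g : Matrix (Fin n) (Fin n) k := (1 : Matrix (Fin n) (Fin n) k).updateCol p x
      with hgdef
    have hdet : g.det = x p := by
      rw [hgdef, ← Matrix.cramer_apply, Matrix.cramer_one]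
      rfl
    have hx0 : x p ≠ 0 := fun h0 => by simp [h0] at hxp
    have hgu : IsUnit g := (Matrix.isUnit_iff_isUnit_det g).mpr
      (isUnit_iff_ne_zero.mpr (by rw [hdet]; exact hx0))
    set u : GL (Fin n) k := hgu.unit with hudef
    have hu : (u : Matrix (Fin n) (Fin n) k) = g := hgu.unit_spec
    have hent : ∀ a b, ‖g a b‖ ≤ 1 := by
      intro a b
      rw [hgdef, Matrix.updateCol_apply]
      split
      · exact hx a
      · rw [Matrix.one_apply]
        split <;> simp
    have hadj : ∀ a b, ‖g.adjugate a b‖ ≤ 1 := by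
      intro a b
      rw [Matrix.adjugate_apply]
      apply aux_det_norm_le_one
      intro i' j'
      rw [Matrix.updateRow_apply]
      split
      · rw [Pi.single_apply]
        split <;> simp
      · exact hent _ _
    have hdet1 : ‖g.det‖ = 1 := by rw [hdet, hxp]
    have hinv : ∀ a b, ‖((u⁻¹ : GL (Fin n) k) : Matrix (Fin n) (Fin n) k) a b‖ ≤ 1 := by
      intro a b
      rw [Matrix.coe_units_inv, hu, Matrix.inv_def, Matrix.smul_apply, smul_eq_mul, norm_mul,
        Ring.inverse_eq_inv, norm_inv, hdet1, inv_one, one_mul]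
      exact hadj a b
    have humem : u ∈ H := hcont u (fun a b => ⟨by rw [hu]; exact hent a b, hinv a b⟩)
    have hux : ((u : GL (Fin n) k) : Matrix (Fin n) (Fin n) k) *ᵥ Pi.single p 1 = x := by
      rw [hu, Matrix.mulVec_single_one]
      ext a
      rw [Matrix.col_apply, hgdef, Matrix.updateCol_apply, if_pos rfl]
    calc N x = N (((u : GL (Fin n) k) : Matrix (Fin n) (Fin n) k) *ᵥ Pi.single p 1) := by
            rw [hux]
      _ = N (Pi.single p 1) := hmul u humem _
  -- transitivity II : basis vectors
  have hswap : ∀ p q : Fin n, N (Pi.single p 1 : Fin n → k) = N (Pi.single q 1) := by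
    intro p q
    set σ := Equiv.swap p q with hσ
    set g : Matrix (Fin n) (Fin n) k := Matrix.of (fun a b => if a = σ b then 1 else 0)
      with hgdef
    have hσσ : ∀ c, σ (σ c) = c := fun c => Equiv.swap_apply_self p q c
    have hgg : g * g = 1 := by
      ext a b
      rw [Matrix.mul_apply, Finset.sum_eq_single (σ b)]
      · simp [hgdef, hσσ, Matrix.one_apply]
      · intro c _ hc
        simp only [hgdef, Matrix.of_apply]
        rw [if_neg hc, mul_zero]
      · intro hb
        exact absurd (Finset.mem_univ _) hb
    set u : GL (Fin n) k := ⟨g, g, hgg, hgg⟩ with hudef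
    have hent : ∀ a b, ‖g a b‖ ≤ 1 := by
      intro a b
      simp only [hgdef, Matrix.of_apply]
      split <;> simp
    have humem : u ∈ H := hcont u (fun a b => ⟨hent a b, hent a b⟩)
    have hu1 : ((u : GL (Fin n) k) : Matrix (Fin n) (Fin n) k) *ᵥ Pi.single q 1
        = Pi.single p 1 := by
      show g *ᵥ Pi.single q 1 = Pi.single p 1
      rw [Matrix.mulVec_single_one]
      ext a
      rw [Matrix.col_apply]
      simp only [hgdef, Matrix.of_apply, hσ]
      rw [Equiv.swap_apply_right, Pi.single_apply]
    calc N (Pi.single p 1 : Fin n → k)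
        = N (((u : GL (Fin n) k) : Matrix (Fin n) (Fin n) k) *ᵥ Pi.single q 1) := by rw [hu1]
      _ = N (Pi.single q 1) := hmul u humem _
  -- main argument
  set v : Fin n → k := (h : Matrix (Fin n) (Fin n) k) *ᵥ Pi.single j 1 with hvdef
  have hiv : ‖(h : Matrix (Fin n) (Fin n) k) i j‖ ≤ ‖v‖ := by
    have hvi : (h : Matrix (Fin n) (Fin n) k) i j = v i := by
      rw [hvdef, Matrix.mulVec_single_one, Matrix.col_apply]
    rw [hvi]
    exact norm_le_pi_norm v i
  refine hiv.trans ?_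
  by_contra hlt
  push_neg at hlt
  obtain ⟨q, hq⟩ := aux_exists_max v
  have hvpos : (0 : ℝ) < ‖v‖ := lt_trans one_pos hlt
  have hc0 : v q ≠ 0 := by
    intro h0
    rw [h0, norm_zero] at hq
    linarith
  have hy_le : ∀ a, ‖((v q)⁻¹ • v) a‖ ≤ 1 := by
    intro a
    simp only [Pi.smul_apply, smul_eq_mul, norm_mul, norm_inv]
    rw [hq]
    calc ‖v‖⁻¹ * ‖v a‖ ≤ ‖v‖⁻¹ * ‖v‖ := by
          exact mul_le_mul_of_nonneg_left (norm_le_pi_norm v a) (inv_nonneg.mpr (le_of_lt hvpos))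
      _ = 1 := inv_mul_cancel₀ (ne_of_gt hvpos)
  have hyq : ‖((v q)⁻¹ • v) q‖ = 1 := by
    have : ((v q)⁻¹ • v) q = 1 := by
      simp [inv_mul_cancel₀ hc0]
    rw [this, norm_one]
  have hNj : 0 < N (Pi.single j 1 : Fin n → k) := by
    have h1 : (1 : ℝ) ≤ ‖(Pi.single j 1 : Fin n → k)‖ := by
      have := norm_le_pi_norm (Pi.single j 1 : Fin n → k) j
      simpa using this
    linarith [hle (Pi.single j 1 : Fin n → k)]
  have e1 : N v = N (Pi.single j 1) := by
    have := hmul h hH (Pi.single j 1)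
    rw [← hvdef] at this
    exact this
  have e2 : N v = ‖v q‖ * N (Pi.single j 1) := by
    have hvy : v = (v q) • ((v q)⁻¹ • v) := by
      rw [smul_smul, mul_inv_cancel₀ hc0, one_smul]
    calc N v = N ((v q) • ((v q)⁻¹ • v)) := by rw [← hvy]
      _ = ‖v q‖ * N ((v q)⁻¹ • v) := hsmul _ _
      _ = ‖v q‖ * N (Pi.single q 1) := by rw [hbase _ q hy_le hyq]
      _ = ‖v q‖ * N (Pi.single j 1) := by rw [hswap q j]
  rw [e1] at e2
  have hcq : ‖v q‖ = 1 := by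
    have hfac : (‖v q‖ - 1) * N (Pi.single j 1 : Fin n → k) = 0 := by linarith
    rcases mul_eq_zero.mp hfac with h' | h'
    · linarith
    · exact absurd h' (ne_of_gt hNj)
  rw [hq] at hcq
  linarith
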